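/- Let α > 0 and let f : Ḡ×I'×I → ℝ be continuous, continuously differentiable in its third variable E, with ∂f/∂E α-Hölder in E uniformly on Ḡ×I'×I (f ∈ C(Ḡ×I', C^{1+α}(I))). Then for every x ∈ Ḡ and E' ∈ (E₀,E_m] both Hadamard finite part integrals below exist and p.f.∫_{E₀}^{E'} f(x,E',E)/(E'−E)² dE = − p.f.∫_{E₀}^{E'} (∂f/∂E)(x,E',E)/(E'−E) dE − (∂f/∂E)(x,E',E') − f(x,E',E₀)/(E'−E₀). -/

import Mathlib

open MeasureTheory Filter Set
open scoped Topology

noncomputable section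

abbrev E3 : Type := EuclideanSpace ℝ (Fin 3)

/-- Hadamard finite part of order 1 with lower limit `a`:
`p.f.∫_a^x g(t)/(x−t) dt = L`. -/
def HasPF1Lower (g : ℝ → ℝ) (a x L : ℝ) : Prop :=
  Tendsto (fun ε : ℝ => (∫ t in a..(x - ε), g t / (x - t)) + g x * Real.log ε)
    (𝓝[>] (0 : ℝ)) (𝓝 L)

/-- Hadamard finite part of order 2 with lower limit `a`, `d` being the left derivative
`g'(x⁻)`: `p.f.∫_a^x g(t)/(t−x)² dt = L` means
`lim_{ε→0⁺} ( ∫_a^{x−ε} g(t)/(t−x)² dt − d·log ε − g(x)/ε ) = L`. -/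
def HasPF2Lower (g : ℝ → ℝ) (d a x L : ℝ) : Prop :=
  Tendsto (fun ε : ℝ => (∫ t in a..(x - ε), g t / (t - x) ^ 2) - d * Real.log ε - g x / ε)
    (𝓝[>] (0 : ℝ)) (𝓝 L)

/-- for `f ∈ C(Ḡ×I', C^{1+α}(I))` (with `fE = ∂f/∂E` continuous, `α`-Hölder
in `E` uniformly), for `x ∈ Ḡ`, `E' ∈ (E₀,E_m]` both finite parts exist and
`p.f.∫_{E₀}^{E'} f(x,E',E)/(E'−E)² dE
 = −p.f.∫_{E₀}^{E'} (∂f/∂E)(x,E',E)/(E'−E) dE − (∂f/∂E)(x,E',E') − f(x,E',E₀)/(E'−E₀)`. -/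
theorem stmt5 (G : Set E3) (hGopen : IsOpen G) (hGbdd : Bornology.IsBounded G)
    (E₀ Em α : ℝ) (hE₀ : 0 ≤ E₀) (hI : E₀ < Em) (hα : 0 < α)
    (f fE : E3 → ℝ → ℝ → ℝ) (C : ℝ)
    (hf : ContinuousOn (fun p : E3 × ℝ × ℝ => f p.1 p.2.1 p.2.2)
      (closure G ×ˢ Set.Icc E₀ Em ×ˢ Set.Icc E₀ Em))
    (hfE : ContinuousOn (fun p : E3 × ℝ × ℝ => fE p.1 p.2.1 p.2.2)
      (closure G ×ˢ Set.Icc E₀ Em ×ˢ Set.Icc E₀ Em))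
    (hderiv : ∀ x ∈ closure G, ∀ E' ∈ Set.Icc E₀ Em, ∀ E ∈ Set.Icc E₀ Em,
      HasDerivWithinAt (fun t => f x E' t) (fE x E' E) (Set.Icc E₀ Em) E)
    (hHolder : ∀ x ∈ closure G, ∀ E' ∈ Set.Icc E₀ Em, ∀ E₁ ∈ Set.Icc E₀ Em,
      ∀ E₂ ∈ Set.Icc E₀ Em, |fE x E' E₁ - fE x E' E₂| ≤ C * |E₁ - E₂| ^ α) :
    ∀ x ∈ closure G, ∀ E' ∈ Set.Ioc E₀ Em, ∃ L₁ : ℝ,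
      HasPF1Lower (fun E => fE x E' E) E₀ E' L₁ ∧
      HasPF2Lower (fun E => f x E' E) (fE x E' E') E₀ E'
        (- L₁ - fE x E' E' - f x E' E₀ / (E' - E₀)) := by
  intro x hx E' hE'
  have hb0 : E₀ < E' := hE'.1
  have hE'Icc : E' ∈ Set.Icc E₀ Em := ⟨hb0.le, hE'.2⟩
  -- continuity of the slices
  have hmapc : ContinuousOn (fun t : ℝ => ((x, E', t) : E3 × ℝ × ℝ)) (Icc E₀ Em) :=
    (continuous_const.prodMk (continuous_const.prodMk continuous_id)).continuousOn
  have hgc : ContinuousOn (fun t => f x E' t) (Icc E₀ Em) :=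
    hf.comp hmapc (fun t ht => ⟨hx, hE'Icc, ht⟩)
  have hg'c : ContinuousOn (fun t => fE x E' t) (Icc E₀ Em) :=
    hfE.comp hmapc (fun t ht => ⟨hx, hE'Icc, ht⟩)
  have hC : 0 ≤ C := by
    have h1 := hHolder x hx E' hE'Icc E₀ ⟨le_rfl, hI.le⟩ E' hE'Icc
    have h2 : (0:ℝ) < |E₀ - E'| ^ α :=
      Real.rpow_pos_of_pos (abs_pos.2 (by linarith)) α
    nlinarith [abs_nonneg (fE x E' E₀ - fE x E' E')]
  set h : ℝ → ℝ := fun t => (fE x E' t - fE x E' E') / (E' - t) with hh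
  -- integrability of h on [E₀, E']
  have hφ : IntervalIntegrable (fun t => C * (E' - t) ^ (α - 1)) volume E₀ E' := by
    have h1 : IntervalIntegrable (fun s : ℝ => s ^ (α - 1)) volume (E' - E₀) 0 :=
      intervalIntegral.intervalIntegrable_rpow' (by linarith)
    simpa using (h1.comp_sub_left E').const_mul C
  have hmeas : AEStronglyMeasurable h (volume.restrict (Set.uIoc E₀ E')) := by
    rw [uIoc_of_le hb0.le, ← Measure.restrict_congr_set Ioo_ae_eq_Ioc]
    have hco : ContinuousOn h (Ico E₀ E') := by
      apply ContinuousOn.div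
      · exact (hg'c.mono (Ico_subset_Icc_self.trans
          (Icc_subset_Icc le_rfl hE'.2))).sub continuousOn_const
      · exact (continuous_const.sub continuous_id).continuousOn
      · intro t ht; have : E' - t > 0 := sub_pos.2 ht.2; exact this.ne'
    exact (hco.aestronglyMeasurable measurableSet_Ico).mono_measure
      (Measure.restrict_mono Ioo_subset_Ico_self le_rfl)
  have hbound : ∀ᵐ t ∂(volume.restrict (Set.uIoc E₀ E')),
      ‖h t‖ ≤ ‖C * (E' - t) ^ (α - 1)‖ := by
    rw [uIoc_of_le hb0.le, ← Measure.restrict_congr_set Ioo_ae_eq_Ioc]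
    refine (ae_restrict_iff' measurableSet_Ioo).2 (ae_of_all _ fun t ht => ?_)
    have htE : (0:ℝ) < E' - t := sub_pos.2 ht.2
    have htIcc : t ∈ Icc E₀ Em := ⟨ht.1.le, ht.2.le.trans hE'.2⟩
    have h1 : |fE x E' t - fE x E' E'| ≤ C * (E' - t) ^ α := by
      have := hHolder x hx E' hE'Icc t htIcc E' hE'Icc
      rwa [show |t - E'| = E' - t by rw [abs_sub_comm]; exact abs_of_pos htE] at this
    have h2 : ‖C * (E' - t) ^ (α - 1)‖ = C * (E' - t) ^ α / (E' - t) := by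
      rw [Real.norm_eq_abs,
        abs_of_nonneg (mul_nonneg hC (Real.rpow_nonneg htE.le _)),
        Real.rpow_sub htE, Real.rpow_one]; ring
    rw [h2, Real.norm_eq_abs, hh, abs_div, abs_of_pos htE]
    gcongr
  have hm : IntervalIntegrable h volume E₀ E' := hφ.mono_fun hmeas hbound
  set L₁ : ℝ := (∫ t in E₀..E', h t) + fE x E' E' * Real.log (E' - E₀) with hL₁
  have hIoo : Ioo (0:ℝ) (E' - E₀) ∈ 𝓝[>] (0:ℝ) :=
    Ioo_mem_nhdsGT_of_mem ⟨le_rfl, sub_pos.2 hb0⟩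
  -- convergence of the truncated integral of h
  have haux : Tendsto (fun ε : ℝ => ∫ t in E₀..(E' - ε), h t) (𝓝[>] (0:ℝ))
      (𝓝 (∫ t in E₀..E', h t)) := by
    have hcont_prim : ContinuousOn (fun b => ∫ t in E₀..b, h t) (uIcc E₀ E') :=
      intervalIntegral.continuousOn_primitive_interval' hm left_mem_uIcc
    have htend_sub : Tendsto (fun ε : ℝ => E' - ε) (𝓝[>] (0:ℝ)) (𝓝[uIcc E₀ E'] E') := by
      apply tendsto_nhdsWithin_of_tendsto_nhds_of_eventually_within
      · simpa using ((show Continuous (fun ε : ℝ => E' - ε) from continuous_const.sub continuous_id).tendsto (0:ℝ)).mono_left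
          nhdsWithin_le_nhds
      · filter_upwards [hIoo] with ε hε
        rw [uIcc_of_le hb0.le]
        exact ⟨by linarith [hε.2], by linarith [hε.1]⟩
    exact (hcont_prim E' right_mem_uIcc).tendsto.comp htend_sub
  -- the log integral
  have hlog : ∀ ε ∈ Ioo (0:ℝ) (E' - E₀),
      (∫ t in E₀..(E' - ε), (E' - t)⁻¹) = Real.log (E' - E₀) - Real.log ε := by
    intro ε hε
    have hab : E₀ ≤ E' - ε := by linarith [hε.2]
    have key : ∀ t ∈ uIcc E₀ (E' - ε),
        HasDerivAt (fun s => -Real.log (E' - s)) (E' - t)⁻¹ t := by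
      intro t ht
      rw [uIcc_of_le hab] at ht
      have h0 : (0:ℝ) < E' - t := by
        rcases ht with ⟨_, ht2⟩; linarith [hε.1]
      have hd : HasDerivAt (fun s : ℝ => E' - s) (-1) t := by
        simpa using (hasDerivAt_id t).const_sub E'
      have := ((Real.hasDerivAt_log h0.ne').comp t hd).neg
      convert this using 1
      · rfl
      · rfl
      · rfl
      ring
    have hint : IntervalIntegrable (fun t => (E' - t)⁻¹) volume E₀ (E' - ε) := by
      apply ContinuousOn.intervalIntegrable
      apply ContinuousOn.inv₀ (continuous_const.sub continuous_id).continuousOn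
      intro t ht
      rw [uIcc_of_le hab] at ht
      have : (0:ℝ) < E' - t := by rcases ht with ⟨_, ht2⟩; linarith [hε.1]
      exact this.ne'
    rw [intervalIntegral.integral_eq_sub_of_hasDerivAt key hint,
      show E' - (E' - ε) = ε by ring]
    ring
  -- splitting the PF1 integrand
  have hsplit : ∀ ε ∈ Ioo (0:ℝ) (E' - E₀),
      (∫ t in E₀..(E' - ε), fE x E' t / (E' - t))
        = (∫ t in E₀..(E' - ε), h t)
          + fE x E' E' * (Real.log (E' - E₀) - Real.log ε) := by
    intro ε hε
    have hab : E₀ ≤ E' - ε := by linarith [hε.2]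
    have h1 : IntervalIntegrable h volume E₀ (E' - ε) := by
      apply hm.mono_set
      rw [uIcc_of_le hab, uIcc_of_le hb0.le]
      exact Icc_subset_Icc le_rfl (by linarith [hε.1])
    have h2inv : IntervalIntegrable (fun t => (E' - t)⁻¹) volume E₀ (E' - ε) := by
      apply ContinuousOn.intervalIntegrable
      apply ContinuousOn.inv₀ (continuous_const.sub continuous_id).continuousOn
      intro t ht
      rw [uIcc_of_le hab] at ht
      have : (0:ℝ) < E' - t := by rcases ht with ⟨_, ht2⟩; linarith [hε.1]
      exact this.ne'
    have h2 : IntervalIntegrable (fun t => fE x E' E' * (E' - t)⁻¹) volume E₀ (E' - ε) :=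
      h2inv.const_mul _
    have hEqOn : EqOn (fun t => fE x E' t / (E' - t))
        (fun t => h t + fE x E' E' * (E' - t)⁻¹) (uIcc E₀ (E' - ε)) := by
      intro t ht
      rw [uIcc_of_le hab] at ht
      have hne : E' - t ≠ 0 := by
        rcases ht with ⟨_, ht2⟩
        have : (0:ℝ) < E' - t := by linarith [hε.1]
        exact this.ne'
      simp only [hh]
      field_simp
      ring
    rw [intervalIntegral.integral_congr hEqOn,
      intervalIntegral.integral_add h1 h2,
      intervalIntegral.integral_const_mul, hlog ε hε]
  -- PF1
  have hPF1 : HasPF1Lower (fun E => fE x E' E) E₀ E' L₁ := by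
    unfold HasPF1Lower
    have hEq : ∀ᶠ ε in 𝓝[>] (0:ℝ),
        (fun ε : ℝ => (∫ t in E₀..(E' - ε), h t)
          + fE x E' E' * Real.log (E' - E₀)) ε
        = (∫ t in E₀..(E' - ε), fE x E' t / (E' - t)) + fE x E' E' * Real.log ε := by
      filter_upwards [hIoo] with ε hε
      rw [hsplit ε hε]; ring
    exact Tendsto.congr' hEq (haux.add tendsto_const_nhds)
  refine ⟨L₁, hPF1, ?_⟩
  -- integration by parts
  have hIBP : ∀ ε ∈ Ioo (0:ℝ) (E' - E₀),
      (∫ t in E₀..(E' - ε), f x E' t / (t - E') ^ 2)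
        = f x E' (E' - ε) / ε - f x E' E₀ / (E' - E₀)
          - ∫ t in E₀..(E' - ε), fE x E' t / (E' - t) := by
    intro ε hε
    have hab : E₀ ≤ E' - ε := by linarith [hε.2]
    have hpos : ∀ t ∈ Icc E₀ (E' - ε), (0:ℝ) < E' - t := by
      intro t ht; rcases ht with ⟨_, ht2⟩; linarith [hε.1]
    have hsub2 : Icc E₀ (E' - ε) ⊆ Icc E₀ Em :=
      Icc_subset_Icc le_rfl (by linarith [hε.1, hE'.2])
    have hgc2 : ContinuousOn (fun t => f x E' t) (Icc E₀ (E' - ε)) := hgc.mono hsub2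
    have hg'c2 : ContinuousOn (fun t => fE x E' t) (Icc E₀ (E' - ε)) := hg'c.mono hsub2
    have hFc : ContinuousOn (fun t => f x E' t / (E' - t)) (Icc E₀ (E' - ε)) :=
      hgc2.div (continuous_const.sub continuous_id).continuousOn
        (fun t ht => (hpos t ht).ne')
    have hder : ∀ t ∈ Ioo E₀ (E' - ε),
        HasDerivWithinAt (fun s => f x E' s / (E' - s))
          (fE x E' t / (E' - t) + f x E' t / (t - E') ^ 2) (Ioi t) t := by
      intro t ht
      have htm : t ∈ Ioo E₀ Em := ⟨ht.1, by linarith [ht.2, hε.1, hE'.2]⟩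
      have hg_at : HasDerivAt (fun s => f x E' s) (fE x E' t) t :=
        (hderiv x hx E' hE'Icc t (Ioo_subset_Icc_self htm)).hasDerivAt
          (Icc_mem_nhds htm.1 htm.2)
      have hd : HasDerivAt (fun s : ℝ => E' - s) (-1) t := by
        simpa using (hasDerivAt_id t).const_sub E'
      have hne : E' - t ≠ 0 := (hpos t (Ioo_subset_Icc_self ht)).ne'
      have := hg_at.div hd hne
      apply HasDerivAt.hasDerivWithinAt
      convert this using 1
      · rfl
      · rfl
      have hne2 : (t - E') ≠ 0 := sub_ne_zero_of_ne (by
        intro hcon; apply hne; rw [hcon]; ring)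
      field_simp
      ring
    have hi1 : IntervalIntegrable (fun t => fE x E' t / (E' - t)) volume E₀ (E' - ε) := by
      apply ContinuousOn.intervalIntegrable
      rw [uIcc_of_le hab]
      exact hg'c2.div (continuous_const.sub continuous_id).continuousOn
        (fun t ht => (hpos t ht).ne')
    have hi2 : IntervalIntegrable (fun t => f x E' t / (t - E') ^ 2) volume E₀ (E' - ε) := by
      apply ContinuousOn.intervalIntegrable
      rw [uIcc_of_le hab]
      apply hgc2.div ((continuous_id.sub continuous_const).pow 2).continuousOn
      intro t ht
      have h3 : t - E' < 0 := by have := hpos t ht; linarith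
      exact pow_ne_zero 2 h3.ne
    have key := intervalIntegral.integral_eq_sub_of_hasDeriv_right_of_le hab hFc hder
      (hi1.add hi2)
    rw [intervalIntegral.integral_add hi1 hi2,
      show E' - (E' - ε) = ε by ring] at key
    linarith [key]
  -- slope limit
  have hslope : Tendsto (fun ε : ℝ => (f x E' (E' - ε) - f x E' E') / ε) (𝓝[>] (0:ℝ))
      (𝓝 (-(fE x E' E'))) := by
    have hD := hderiv x hx E' hE'Icc E' hE'Icc
    rw [hasDerivWithinAt_iff_tendsto_slope] at hD
    have hmap : Tendsto (fun ε : ℝ => E' - ε) (𝓝[>] (0:ℝ))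
        (𝓝[Icc E₀ Em \ {E'}] E') := by
      apply tendsto_nhdsWithin_of_tendsto_nhds_of_eventually_within
      · simpa using ((show Continuous (fun ε : ℝ => E' - ε) from continuous_const.sub continuous_id).tendsto (0:ℝ)).mono_left
          nhdsWithin_le_nhds
      · filter_upwards [hIoo] with ε hε
        refine ⟨⟨by linarith [hε.2], by linarith [hε.1, hE'.2]⟩, ?_⟩
        simp only [mem_singleton_iff]
        intro hcon
        exact absurd (sub_eq_self.mp hcon) (ne_of_gt hε.1)
    have := (hD.comp hmap).neg
    refine this.congr fun ε => ?_
    simp only [Function.comp_apply, slope_def_field]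
    rw [show E' - ε - E' = -ε by ring, div_neg, neg_neg]
  -- conclude PF2
  unfold HasPF2Lower
  have hEq2 : ∀ᶠ ε in 𝓝[>] (0:ℝ),
      (fun ε : ℝ => (f x E' (E' - ε) - f x E' E') / ε - f x E' E₀ / (E' - E₀)
        - ((∫ t in E₀..(E' - ε), fE x E' t / (E' - t)) + fE x E' E' * Real.log ε)) ε
      = (∫ t in E₀..(E' - ε), f x E' t / (t - E') ^ 2)
          - fE x E' E' * Real.log ε - f x E' E' / ε := by
    filter_upwards [hIoo] with ε hε
    rw [hIBP ε hε, sub_div]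
    ring
  have hmain := (hslope.sub (tendsto_const_nhds (x := f x E' E₀ / (E' - E₀)))).sub hPF1
  rw [show -L₁ - fE x E' E' - f x E' E₀ / (E' - E₀)
      = -(fE x E' E') - f x E' E₀ / (E' - E₀) - L₁ by ring]
  exact Tendsto.congr' hEq2 hmain
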